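/- In the Hilbert cube Q = [-1,1]^ℕ, the countably infinite family {(W_n^-, W_n^+) : n ∈ ℕ} of pairs of opposite faces is essential; in particular, the Hilbert cube is strongly infinite dimensional. -/

import Mathlib

open Set

/-- A separator between `A` and `B` in a topological space: a closed set `L` whose
complement is the union of two disjoint open sets containing `A` and `B` respectively. -/
def IsSeparator {X : Type*} [TopologicalSpace X] (A B L : Set X) : Prop :=
  IsClosed L ∧ ∃ U V : Set X, IsOpen U ∧ IsOpen V ∧ Disjoint U V ∧
    A ⊆ U ∧ B ⊆ V ∧ Lᶜ = U ∪ V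

/-- A family of pairs of sets is essential if every choice of separators has
nonempty intersection. -/
def IsEssentialFamily {X : Type*} [TopologicalSpace X] {Γ : Type*}
    (A B : Γ → Set X) : Prop :=
  ∀ L : Γ → Set X, (∀ i, IsSeparator (A i) (B i) (L i)) → (⋂ i, L i).Nonempty

/-- A space is strongly infinite dimensional if it admits a countably infinite
essential family of pairs of disjoint closed subsets. -/
def StronglyInfiniteDimensional (X : Type*) [TopologicalSpace X] : Prop :=
  ∃ A B : ℕ → Set X,
    (∀ n, IsClosed (A n) ∧ IsClosed (B n) ∧ Disjoint (A n) (B n)) ∧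
    IsEssentialFamily A B

/-- The Hilbert cube `Q = [-1,1]^ℕ`. -/
abbrev HilbertCube : Type := ℕ → Set.Icc (-1 : ℝ) 1

/-- The negative face `W_i^- = {x ∈ Q : x_i = -1}`. -/
def negFace (i : ℕ) : Set HilbertCube := {x | (x i : ℝ) = -1}

/-- The positive face `W_i^+ = {x ∈ Q : x_i = 1}`. -/
def posFace (i : ℕ) : Set HilbertCube := {x | (x i : ℝ) = 1}

open Finset
open scoped Classical
open Fin.NatCast
namespace HilbertAux


lemma count_doors (M : ℕ) (lab : ℕ → ℕ) (hlab : ∀ j, lab j ≤ M) :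
    ∑ j ∈ Finset.range (M+1),
      (if (∀ m < M, ∃ j' ≤ M, j' ≠ j ∧ lab j' = m) then (1 : ZMod 2) else 0)
    = if (∀ m ≤ M, ∃ j' ≤ M, lab j' = m) then 1 else 0 := by
  by_cases hfull : ∀ m ≤ M, ∃ j' ≤ M, lab j' = m
  · rw [if_pos hfull]
    -- labels are injective on range (M+1)
    have himage : (Finset.range (M+1)).image lab = Finset.range (M+1) := by
      apply Finset.Subset.antisymm
      · intro m hm
        obtain ⟨j, hj, rfl⟩ := Finset.mem_image.1 hm
        exact Finset.mem_range.2 (Nat.lt_succ_of_le (hlab j))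
      · intro m hm
        obtain ⟨j', hj', hj'e⟩ := hfull m (Nat.lt_succ_iff.1 (Finset.mem_range.1 hm))
        exact Finset.mem_image.2 ⟨j', Finset.mem_range.2 (Nat.lt_succ_of_le hj'), hj'e⟩
    have hinj : Set.InjOn lab (Finset.range (M+1)) := by
      rw [← Finset.card_image_iff, himage]
    obtain ⟨jn, hjn, hjne⟩ := hfull M le_rfl
    have hdoor : ∀ j ∈ Finset.range (M+1),
        (∀ m < M, ∃ j' ≤ M, j' ≠ j ∧ lab j' = m) ↔ j = jn := by
      intro j hj
      constructor
      · intro hd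
        by_contra hne
        have hlj : lab j < M := by
          rcases Nat.lt_or_ge (lab j) M with h | h
          · exact h
          · exfalso; have : lab j = M := le_antisymm (hlab j) h
            exact hne (hinj (by simpa [Nat.lt_succ_iff] using Finset.mem_range.1 hj)
              (by simp [Nat.lt_succ_of_le hjn]) (this.trans hjne.symm))
        obtain ⟨j', hj', hj'ne, hj'e⟩ := hd (lab j) hlj
        exact hj'ne (hinj (by simp [Nat.lt_succ_of_le hj']) (by simpa [Nat.lt_succ_iff] using Finset.mem_range.1 hj) hj'e)
      · rintro rfl
        intro m hm
        obtain ⟨j', hj', hj'e⟩ := hfull m hm.le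
        exact ⟨j', hj', fun h => by rw [h] at hj'e; omega, hj'e⟩
    calc ∑ j ∈ Finset.range (M+1),
          (if (∀ m < M, ∃ j' ≤ M, j' ≠ j ∧ lab j' = m) then (1 : ZMod 2) else 0)
        = ∑ j ∈ Finset.range (M+1), (if j = jn then (1 : ZMod 2) else 0) := by
          exact Finset.sum_congr rfl fun j hj => by rw [if_congr (hdoor j hj) rfl rfl]
      _ = 1 := by rw [Finset.sum_ite_eq' _ jn fun _ => (1:ZMod 2)];
                  simp [Finset.mem_range.2 (Nat.lt_succ_of_le hjn)]
  · rw [if_neg hfull]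
    by_cases hall : ∀ m < M, ∃ j' ≤ M, lab j' = m
    · -- M is the missing value; there's a collision pair a ≠ b
      have hltM : ∀ j ≤ M, lab j < M := by
        intro j hj
        rcases Nat.lt_or_ge (lab j) M with h | h
        · exact h
        · exfalso
          exact hfull (fun m hm => by
            rcases Nat.lt_or_ge m M with h' | h'
            · exact hall m h'
            · exact ⟨j, hj, by have := hlab j; omega⟩)
      have hM0 : 0 < M := by
        rcases Nat.eq_zero_or_pos M with rfl | h
        · exact absurd (fun m hm => ⟨0, le_rfl, by have := hlab 0; omega⟩ : ∀ m ≤ 0, ∃ j' ≤ 0, lab j' = m) hfull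
        · exact h
      obtain ⟨a, ha, b, hb, hab, habe⟩ :=
        Finset.exists_ne_map_eq_of_card_lt_of_maps_to
          (s := Finset.range (M+1)) (t := Finset.range M)
          (by simp) (fun j hj => Finset.mem_range.2 (hltM j (Nat.lt_succ_iff.1 (Finset.mem_range.1 hj))))
          (f := lab)
      have ha' : a ≤ M := Nat.lt_succ_iff.1 (Finset.mem_range.1 ha)
      have hb' : b ≤ M := Nat.lt_succ_iff.1 (Finset.mem_range.1 hb)
      -- injectivity away from a
      have hinj : Set.InjOn lab ((Finset.range (M+1)).erase a) := by
        rw [← Finset.card_image_iff]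
        have h1 : ((Finset.range (M+1)).erase a).image lab = Finset.range M := by
          apply Finset.Subset.antisymm
          · intro m hm
            obtain ⟨j, hj, rfl⟩ := Finset.mem_image.1 hm
            have := Finset.mem_of_mem_erase hj
            exact Finset.mem_range.2 (hltM j (Nat.lt_succ_iff.1 (Finset.mem_range.1 this)))
          · intro m hm
            obtain ⟨j', hj', hj'e⟩ := hall m (Finset.mem_range.1 hm)
            rcases eq_or_ne j' a with rfl | hne
            · exact Finset.mem_image.2 ⟨b, Finset.mem_erase.2 ⟨Ne.symm hab, hb⟩, by omega⟩
            · exact Finset.mem_image.2 ⟨j', Finset.mem_erase.2 ⟨hne, Finset.mem_range.2 (Nat.lt_succ_of_le hj')⟩, hj'e⟩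
        rw [h1]
        simp [Finset.card_erase_of_mem ha]
      have hdoor : ∀ j ∈ Finset.range (M+1),
          (∀ m < M, ∃ j' ≤ M, j' ≠ j ∧ lab j' = m) ↔ (j = a ∨ j = b) := by
        intro j hj
        have hjM : j ≤ M := Nat.lt_succ_iff.1 (Finset.mem_range.1 hj)
        constructor
        · intro hd
          by_contra hne
          push_neg at hne
          obtain ⟨hna, hnb⟩ := hne
          obtain ⟨j', hj', hj'ne, hj'e⟩ := hd (lab j) (hltM j hjM)
          rcases eq_or_ne j' a with rfl | hne'
          · -- lab j = lab a = lab b, j,b ≠ a ⇒ j = b by hinj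
            exact hnb (hinj (Finset.mem_erase.2 ⟨hna, hj⟩) (Finset.mem_erase.2 ⟨Ne.symm hab, hb⟩) (by omega))
          · exact hj'ne (hinj (Finset.mem_erase.2 ⟨hne', Finset.mem_range.2 (Nat.lt_succ_of_le hj')⟩)
              (Finset.mem_erase.2 ⟨hna, hj⟩) hj'e)
        · intro hcase m hm
          obtain ⟨j', hj', hj'e⟩ := hall m hm
          rcases hcase with rfl | rfl
          · rcases eq_or_ne j' j with rfl | hne
            · exact ⟨b, hb', Ne.symm hab, by omega⟩
            · exact ⟨j', hj', hne, hj'e⟩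
          · rcases eq_or_ne j' j with rfl | hne
            · exact ⟨a, ha', hab, by omega⟩
            · exact ⟨j', hj', hne, hj'e⟩
      calc ∑ j ∈ Finset.range (M+1),
            (if (∀ m < M, ∃ j' ≤ M, j' ≠ j ∧ lab j' = m) then (1 : ZMod 2) else 0)
          = ∑ j ∈ Finset.range (M+1),
            ((if j = a then (1 : ZMod 2) else 0) + (if j = b then (1:ZMod 2) else 0)) := by
            refine Finset.sum_congr rfl fun j hj => ?_
            rw [if_congr (hdoor j hj) rfl rfl]
            rcases eq_or_ne j a with rfl | hna
            · simp [hab]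
            · rcases eq_or_ne j b with rfl | hnb
              · simp [hna]
              · simp [hna, hnb]
        _ = 0 := by
            rw [Finset.sum_add_distrib, Finset.sum_ite_eq' _ a fun _ => (1:ZMod 2),
              Finset.sum_ite_eq' _ b fun _ => (1:ZMod 2)]
            simp [ha, hb]
            decide
    · push_neg at hall
      obtain ⟨m₀, hm₀, hno⟩ := hall
      refine Finset.sum_eq_zero fun j hj => ?_
      rw [if_neg]
      intro hd
      obtain ⟨j', hj', _, hj'e⟩ := hd m₀ hm₀
      exact (hno j' hj') hj'e


variable {D k n : ℕ}

lemma count_doors' (M : ℕ) (lab : ℕ → ℕ) (hlab : ∀ j, lab j ≤ M)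
    (door : ℕ → Prop) (full : Prop)
    (hdoor : ∀ j, door j ↔ (∀ m < M, ∃ j' ≤ M, j' ≠ j ∧ lab j' = m))
    (hfull : full ↔ (∀ m ≤ M, ∃ j' ≤ M, lab j' = m)) :
    ∑ j ∈ Finset.range (M+1), (if door j then (1:ZMod 2) else 0)
      = if full then (1:ZMod 2) else 0 := by
  rw [Finset.sum_congr rfl (fun j _ => if_congr (hdoor j) rfl rfl),
    count_doors M lab hlab, if_congr hfull.symm rfl rfl]

/-- vertex `j` of the Freudenthal simplex with corner `x` and increment-time permutation `w`. -/
def vert (x : Fin D → Fin k) (w : Equiv.Perm (Fin D)) (j : ℕ) : Fin D → ℕ :=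
  fun i => (x i : ℕ) + (if (w i : ℕ) < j then 1 else 0)

def IsDoor (ℓ : (Fin D → ℕ) → ℕ) (x : Fin D → Fin k) (w : Equiv.Perm (Fin D)) (j : ℕ) : Prop :=
  ∀ m < D, ∃ j' ≤ D, j' ≠ j ∧ ℓ (vert x w j') = m

def IsFull (ℓ : (Fin D → ℕ) → ℕ) (x : Fin D → Fin k) (w : Equiv.Perm (Fin D)) : Prop :=
  ∀ m ≤ D, ∃ j' ≤ D, ℓ (vert x w j') = m

lemma vert_le (x : Fin D → Fin k) (w : Equiv.Perm (Fin D)) (j : ℕ) (i : Fin D) :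
    vert x w j i ≤ k := by
  have := (x i).isLt
  unfold vert; split <;> omega

/-- bump coordinate c up by one (junk if out of range) -/
def bump (x : Fin D → Fin k) (c : Fin D) : Fin D → Fin k :=
  Function.update x c (if h : (x c : ℕ) + 1 < k then ⟨(x c : ℕ) + 1, h⟩ else x c)

/-- drop coordinate c down by one -/
def dropc (x : Fin D → Fin k) (c : Fin D) : Fin D → Fin k :=
  Function.update x c ⟨(x c : ℕ) - 1, lt_of_le_of_lt (Nat.sub_le _ _) (x c).isLt⟩

/-- middle pivot preserves all vertices except vertex j -/
lemma vert_swap (x : Fin (n+1) → Fin k) (w : Equiv.Perm (Fin (n+1))) (j : ℕ)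
    (h0 : 0 < j) (h1 : j < n + 1) (j' : ℕ) (hj' : j' ≠ j) :
    vert x (Equiv.swap ((j-1 : ℕ) : Fin (n+1)) ((j : ℕ) : Fin (n+1)) * w) j' = vert x w j' := by
  funext i
  unfold vert
  congr 1
  have hva : (((j-1 : ℕ) : Fin (n+1)) : ℕ) = j - 1 := Fin.val_cast_of_lt (by omega)
  have hvb : (((j : ℕ) : Fin (n+1)) : ℕ) = j := Fin.val_cast_of_lt h1
  simp only [Equiv.Perm.mul_apply]
  have key : ((Equiv.swap ((j-1 : ℕ) : Fin (n+1)) ((j : ℕ) : Fin (n+1)) (w i)) : ℕ) < j'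
      ↔ ((w i : ℕ) < j') := by
    rcases eq_or_ne (w i) (((j-1 : ℕ) : Fin (n+1))) with he | hne
    · rw [he, Equiv.swap_apply_left, hva, hvb]
      omega
    · rcases eq_or_ne (w i) (((j : ℕ) : Fin (n+1))) with he2 | hne2
      · rw [he2, Equiv.swap_apply_right, hva, hvb]
        omega
      · rw [Equiv.swap_apply_of_ne_of_ne hne hne2]
  simp only [key]

lemma finRotate_inv_apply (v : Fin (n+1)) :
    (finRotate (n+1))⁻¹ v = v - 1 := by
  rw [Equiv.Perm.inv_def, Equiv.symm_apply_eq, finRotate_succ_apply, sub_add_cancel]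

lemma finRotate_inv_val (v : Fin (n+1)) (hv : v ≠ 0) :
    (((finRotate (n+1))⁻¹ v : Fin (n+1)) : ℕ) = (v : ℕ) - 1 := by
  rw [finRotate_inv_apply, Fin.coe_sub_one, if_neg hv]

lemma finRotate_inv_zero : ((finRotate (n+1))⁻¹ (0 : Fin (n+1))) = Fin.last n := by
  rw [finRotate_inv_apply]
  apply Fin.ext
  rw [Fin.coe_sub_one]
  simp

/-- rotation pivot: vertices of the new simplex are the old ones shifted by one -/
lemma vert_rotate (x : Fin (n+1) → Fin k) (w : Equiv.Perm (Fin (n+1)))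
    (h : (x (w.symm 0) : ℕ) + 1 < k) (m : ℕ) (hm : m ≤ n) :
    vert (bump x (w.symm 0)) ((finRotate (n+1))⁻¹ * w) m = vert x w (m+1) := by
  funext i
  unfold vert bump
  rcases eq_or_ne i (w.symm 0) with rfl | hne
  · rw [Function.update_self, dif_pos h]
    have hwc : w (w.symm 0) = 0 := w.apply_symm_apply 0
    simp only [Equiv.Perm.mul_apply, hwc, finRotate_inv_zero, Fin.val_last]
    have h1 : ¬ (n < m) := by omega
    have h2 : ((0 : Fin (n+1)) : ℕ) < m + 1 := by simp
    simp [h1, h2]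
  · rw [Function.update_of_ne hne]
    congr 1
    have hw : w i ≠ 0 := by
      intro h0
      exact hne (by rw [← h0, w.symm_apply_apply])
    simp only [Equiv.Perm.mul_apply]
    have h1 : 1 ≤ (w i : ℕ) := Nat.one_le_iff_ne_zero.2 (fun h' => hw (Fin.ext h'))
    have key : (((finRotate (n+1))⁻¹ (w i) : Fin (n+1)) : ℕ) < m ↔ ((w i : ℕ) < m + 1) := by
      rw [finRotate_inv_val _ hw]
      omega
    simp only [key]


/-- A door at the bottom vertex forces the pivot coordinate to be strictly below the top. -/
lemma door_zero_interior (hk : 0 < k) (ℓ : (Fin (n+1) → ℕ) → ℕ)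
    (Hk : ∀ x (i : Fin (n+1)), x i = k → ℓ x ≠ (i : ℕ))
    (x : Fin (n+1) → Fin k) (w : Equiv.Perm (Fin (n+1)))
    (hd : IsDoor ℓ x w 0) : (x (w.symm 0) : ℕ) + 1 < k := by
  by_contra hcon
  have hxc : (x (w.symm 0) : ℕ) + 1 = k := by
    have := (x (w.symm 0)).isLt; omega
  obtain ⟨j', hj', hj'ne, hj'e⟩ := hd (w.symm 0 : Fin (n+1)) (w.symm 0).isLt
  have hv : vert x w j' (w.symm 0) = k := by
    unfold vert
    have : ((w (w.symm 0)) : ℕ) = 0 := by rw [w.apply_symm_apply]; rfl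
    rw [this, if_pos (by omega)]
    omega
  exact Hk _ _ hv hj'e

/-- A door at the top vertex on the bottom face forces the slow coordinate to be the last. -/
lemma door_top_bottom_face (ℓ : (Fin (n+1) → ℕ) → ℕ)
    (H0 : ∀ x (i : Fin (n+1)), x i = 0 → ℓ x ≤ (i : ℕ))
    (x : Fin (n+1) → Fin k) (w : Equiv.Perm (Fin (n+1)))
    (hd : IsDoor ℓ x w (n+1)) (hx : (x (w.symm (Fin.last n)) : ℕ) = 0) :
    w.symm (Fin.last n) = Fin.last n := by
  by_contra hne
  have hlt : ((w.symm (Fin.last n)) : ℕ) < n := by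
    have := (w.symm (Fin.last n)).isLt
    have : ((w.symm (Fin.last n)) : ℕ) ≠ n := fun h => hne (Fin.ext (by simp [h]))
    omega
  obtain ⟨j', hj', hj'ne, hj'e⟩ := hd n (by omega)
  have hv : vert x w j' (w.symm (Fin.last n)) = 0 := by
    unfold vert
    have h1 : ((w (w.symm (Fin.last n))) : ℕ) = n := by rw [w.apply_symm_apply]; rfl
    rw [h1, if_neg (by omega)]
    omega
  have := H0 _ _ hv
  omega

/-- restrict a permutation fixing the last element -/
def permRestrict (w : Equiv.Perm (Fin (n+1))) (hw : w (Fin.last n) = Fin.last n) :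
    Equiv.Perm (Fin n) where
  toFun i := (w i.castSucc).castPred (fun h => (Fin.castSucc_lt_last i).ne
      (w.injective (h.trans hw.symm)))
  invFun i := (w.symm i.castSucc).castPred (fun h => (Fin.castSucc_lt_last i).ne
      (w.symm.injective (h.trans ((Equiv.symm_apply_eq w).mpr hw.symm).symm)))
  left_inv i := by
    apply Fin.castSucc_injective
    rw [Fin.castSucc_castPred, Fin.castSucc_castPred, w.symm_apply_apply]
  right_inv i := by
    apply Fin.castSucc_injective
    rw [Fin.castSucc_castPred, Fin.castSucc_castPred, w.apply_symm_apply]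

/-- extend a permutation by fixing the last element -/
def permExtend (u : Equiv.Perm (Fin n)) : Equiv.Perm (Fin (n+1)) where
  toFun := Fin.lastCases (Fin.last n) (fun i => (u i).castSucc)
  invFun := Fin.lastCases (Fin.last n) (fun i => (u.symm i).castSucc)
  left_inv i := by
    induction i using Fin.lastCases with
    | last => simp
    | cast i => simp
  right_inv i := by
    induction i using Fin.lastCases with
    | last => simp
    | cast i => simp

@[simp] lemma permExtend_last (u : Equiv.Perm (Fin n)) :
    permExtend u (Fin.last n) = Fin.last n := by
  simp [permExtend]

@[simp] lemma permExtend_castSucc (u : Equiv.Perm (Fin n)) (i : Fin n) :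
    permExtend u i.castSucc = (u i).castSucc := by
  simp [permExtend]

lemma permExtend_restrict (w : Equiv.Perm (Fin (n+1))) (hw : w (Fin.last n) = Fin.last n) :
    permExtend (permRestrict w hw) = w := by
  apply Equiv.ext
  intro i
  induction i using Fin.lastCases with
  | last => simp [hw]
  | cast i => simp [permRestrict, permExtend]

lemma permRestrict_extend (u : Equiv.Perm (Fin n))
    (h : permExtend u (Fin.last n) = Fin.last n := permExtend_last u) :
    permRestrict (permExtend u) h = u := by
  apply Equiv.ext
  intro i
  apply Fin.castSucc_injective
  simp [permRestrict]

/-- on the bottom face, vertices restrict via snoc -/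
lemma vert_snoc (hk : 0 < k) (x : Fin (n+1) → Fin k) (w : Equiv.Perm (Fin (n+1)))
    (hx : (x (Fin.last n) : ℕ) = 0) (hw : w (Fin.last n) = Fin.last n)
    (m : ℕ) (hm : m ≤ n) :
    vert x w m = Fin.snoc (vert (fun i => x i.castSucc) (permRestrict w hw) m) (0 : ℕ) := by
  funext i
  induction i using Fin.lastCases with
  | last =>
    rw [Fin.snoc_last]
    unfold vert
    rw [hw]
    simp only [Fin.val_last]
    rw [if_neg (by omega)]
    omega
  | cast i =>
    rw [Fin.snoc_castSucc]
    have hval : ((w i.castSucc : Fin (n+1)) : ℕ) = ((permRestrict w hw i : Fin n) : ℕ) := by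
      simp [permRestrict]
    unfold vert
    simp only [hval]


lemma rot_last_eq_zero : (finRotate (n+1)) (Fin.last n) = 0 := by
  rw [finRotate_succ_apply, Fin.last_add_one]

lemma rotinv_mul_symm_last (w : Equiv.Perm (Fin (n+1))) :
    ((finRotate (n+1))⁻¹ * w).symm (Fin.last n) = w.symm 0 := by
  rw [Equiv.symm_apply_eq, Equiv.Perm.mul_apply, Equiv.apply_symm_apply, ← finRotate_inv_zero]

lemma rotmul_symm_zero (w : Equiv.Perm (Fin (n+1))) :
    ((finRotate (n+1)) * w).symm 0 = w.symm (Fin.last n) := by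
  rw [Equiv.symm_apply_eq, Equiv.Perm.mul_apply, Equiv.apply_symm_apply, rot_last_eq_zero]

lemma bump_apply_ne (x : Fin D → Fin k) (c : Fin D) {i : Fin D} (h : i ≠ c) :
    bump x c i = x i := Function.update_of_ne h _ _

lemma dropc_apply_ne (x : Fin D → Fin k) (d : Fin D) {i : Fin D} (h : i ≠ d) :
    dropc x d i = x i := Function.update_of_ne h _ _

lemma bump_val (x : Fin D → Fin k) (c : Fin D) (h : (x c : ℕ) + 1 < k) :
    ((bump x c c) : ℕ) = (x c : ℕ) + 1 := by
  unfold bump; rw [Function.update_self, dif_pos h]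

lemma dropc_val (x : Fin D → Fin k) (d : Fin D) :
    ((dropc x d) d : ℕ) = (x d : ℕ) - 1 := by
  unfold dropc; rw [Function.update_self]

lemma dropc_bump (x : Fin (n+1) → Fin k) (c : Fin (n+1)) (h : (x c : ℕ) + 1 < k) :
    dropc (bump x c) c = x := by
  funext i
  rcases eq_or_ne i c with rfl | hne
  · apply Fin.ext
    rw [dropc_val, bump_val x i h]
    omega
  · rw [dropc_apply_ne _ _ hne, bump_apply_ne _ _ hne]

lemma bump_dropc (x : Fin (n+1) → Fin k) (d : Fin (n+1)) (h : (x d : ℕ) ≠ 0) :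
    bump (dropc x d) d = x := by
  funext i
  rcases eq_or_ne i d with rfl | hne
  · apply Fin.ext
    have h1 : ((dropc x i) i : ℕ) = (x i : ℕ) - 1 := dropc_val x i
    have hcond : ((dropc x i) i : ℕ) + 1 < k := by
      have := (x i).isLt; omega
    rw [bump_val _ _ hcond, h1]
    omega
  · rw [bump_apply_ne _ _ hne, dropc_apply_ne _ _ hne]

/-- door transfer across the rotation pivot -/
lemma door_rotate_iff (ℓ : (Fin (n+1) → ℕ) → ℕ) (x : Fin (n+1) → Fin k)
    (w : Equiv.Perm (Fin (n+1))) (h : (x (w.symm 0) : ℕ) + 1 < k) :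
    IsDoor ℓ (bump x (w.symm 0)) ((finRotate (n+1))⁻¹ * w) (n+1) ↔ IsDoor ℓ x w 0 := by
  constructor
  · intro hd m hm
    obtain ⟨j'', hj'', hj''ne, hj''e⟩ := hd m hm
    refine ⟨j'' + 1, by omega, by omega, ?_⟩
    rw [← vert_rotate x w h j'' (by omega)]
    exact hj''e
  · intro hd m hm
    obtain ⟨j', hj', hj'ne, hj'e⟩ := hd m hm
    refine ⟨j' - 1, by omega, by omega, ?_⟩
    rw [vert_rotate x w h (j'-1) (by omega)]
    have hj : j' - 1 + 1 = j' := by omega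
    rw [hj]
    exact hj'e

/-- door transfer across the middle pivot -/
lemma door_swap_iff (ℓ : (Fin (n+1) → ℕ) → ℕ) (x : Fin (n+1) → Fin k)
    (w : Equiv.Perm (Fin (n+1))) (j : ℕ) (h0 : 0 < j) (h1 : j < n+1) :
    IsDoor ℓ x (Equiv.swap ((j-1 : ℕ) : Fin (n+1)) ((j : ℕ) : Fin (n+1)) * w) j ↔
    IsDoor ℓ x w j := by
  constructor <;> intro hd m hm <;> obtain ⟨j', hj', hj'ne, hj'e⟩ := hd m hm <;>
    refine ⟨j', hj', hj'ne, ?_⟩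
  · rw [← vert_swap x w j h0 h1 j' hj'ne]
    exact hj'e
  · rw [vert_swap x w j h0 h1 j' hj'ne]
    exact hj'e

/-- the pivot involution on non-boundary door pairs -/
def phi (a : ((Fin (n+1) → Fin k) × Equiv.Perm (Fin (n+1))) × ℕ) :
    ((Fin (n+1) → Fin k) × Equiv.Perm (Fin (n+1))) × ℕ :=
  if a.2 = 0 then
    ((bump a.1.1 (a.1.2.symm 0), (finRotate (n+1))⁻¹ * a.1.2), n+1)
  else if a.2 = n+1 then
    ((dropc a.1.1 (a.1.2.symm (Fin.last n)), finRotate (n+1) * a.1.2), 0)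
  else
    ((a.1.1, Equiv.swap ((a.2 - 1 : ℕ) : Fin (n+1)) ((a.2 : ℕ) : Fin (n+1)) * a.1.2), a.2)

lemma phi_zero (x : Fin (n+1) → Fin k) (w : Equiv.Perm (Fin (n+1))) :
    phi ((x, w), 0) = ((bump x (w.symm 0), (finRotate (n+1))⁻¹ * w), n+1) := by
  simp [phi]

lemma phi_top (x : Fin (n+1) → Fin k) (w : Equiv.Perm (Fin (n+1))) :
    phi ((x, w), n+1) = ((dropc x (w.symm (Fin.last n)), finRotate (n+1) * w), 0) := by
  simp [phi]

lemma phi_mid (x : Fin (n+1) → Fin k) (w : Equiv.Perm (Fin (n+1))) (j : ℕ)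
    (hj0 : j ≠ 0) (hj1 : j ≠ n+1) :
    phi ((x, w), j)
      = ((x, Equiv.swap ((j-1 : ℕ) : Fin (n+1)) ((j : ℕ) : Fin (n+1)) * w), j) := by
  simp [phi, hj0, hj1]

theorem key : ∀ (D k : ℕ), 0 < k → ∀ (ℓ : (Fin D → ℕ) → ℕ),
    (∀ x (i : Fin D), x i = 0 → ℓ x ≤ (i : ℕ)) →
    (∀ x (i : Fin D), x i = k → ℓ x ≠ (i : ℕ)) →
    (∀ x, ℓ x ≤ D) →
    (∑ s : (Fin D → Fin k) × Equiv.Perm (Fin D),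
      (if IsFull ℓ s.1 s.2 then (1 : ZMod 2) else 0)) = 1 := by
  intro D
  induction D with
  | zero =>
    intro k hk ℓ H0 Hk Hr
    have hfull : ∀ (x : Fin 0 → Fin k) (w : Equiv.Perm (Fin 0)), IsFull ℓ x w := by
      intro x w m hm
      interval_cases m
      exact ⟨0, le_rfl, Nat.le_zero.1 (Hr _)⟩
    rw [Finset.sum_congr rfl (fun s _ => if_pos (hfull s.1 s.2))]
    rw [Finset.sum_const, Finset.card_univ]
    have hcard : Fintype.card ((Fin 0 → Fin k) × Equiv.Perm (Fin 0)) = 1 := by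
      simp
    rw [hcard, one_smul]
  | succ n IH =>
    intro k hk ℓ H0 Hk Hr
    have step1 : ∀ s : (Fin (n+1) → Fin k) × Equiv.Perm (Fin (n+1)),
        (if IsFull ℓ s.1 s.2 then (1 : ZMod 2) else 0)
        = ∑ j ∈ Finset.range (n+2), (if IsDoor ℓ s.1 s.2 j then (1 : ZMod 2) else 0) := by
      intro s
      exact (count_doors' (n+1) (fun j => ℓ (vert s.1 s.2 j)) (fun j => Hr _)
        (fun j => IsDoor ℓ s.1 s.2 j) (IsFull ℓ s.1 s.2) (fun j => Iff.rfl) Iff.rfl).symm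
    rw [Finset.sum_congr rfl (fun s _ => step1 s)]
    rw [← Finset.sum_product' (s := Finset.univ) (t := Finset.range (n+2))
      (f := fun (s : (Fin (n+1) → Fin k) × Equiv.Perm (Fin (n+1))) (j : ℕ) => if IsDoor ℓ s.1 s.2 j then (1:ZMod 2) else 0)]
    rw [← Finset.sum_filter (fun (a : ((Fin (n+1) → Fin k) × Equiv.Perm (Fin (n+1))) × ℕ) =>
      IsDoor ℓ a.1.1 a.1.2 a.2) (fun _ => (1:ZMod 2))]
    -- restricted label hypotheses
    have H0' : ∀ (y : Fin n → ℕ) (i : Fin n), y i = 0 → ℓ (Fin.snoc y 0) ≤ (i:ℕ) := by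
      intro y i hy
      have := H0 (Fin.snoc y 0) i.castSucc (by rw [Fin.snoc_castSucc]; exact hy)
      simpa using this
    have Hk' : ∀ (y : Fin n → ℕ) (i : Fin n), y i = k → ℓ (Fin.snoc y 0) ≠ (i:ℕ) := by
      intro y i hy
      have := Hk (Fin.snoc y 0) i.castSucc (by rw [Fin.snoc_castSucc]; exact hy)
      simpa using this
    have Hr' : ∀ (y : Fin n → ℕ), ℓ (Fin.snoc y 0) ≤ n := by
      intro y
      have := H0 (Fin.snoc y 0) (Fin.last n) (Fin.snoc_last _ _)
      simpa using this
    have hIH := IH k hk (fun y => ℓ (Fin.snoc y 0)) H0' Hk' Hr'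
    have hIH' : ∑ t ∈ Finset.univ.filter
        (fun (t : (Fin n → Fin k) × Equiv.Perm (Fin n)) =>
          IsFull (fun y => ℓ (Fin.snoc y 0)) t.1 t.2), (1:ZMod 2) = 1 := by
      rw [Finset.sum_filter]
      exact hIH
    -- boundary part
    have hB : ∑ _a ∈ ((Finset.univ ×ˢ Finset.range (n+2)).filter (fun (a : ((Fin (n+1) → Fin k) × Equiv.Perm (Fin (n+1))) × ℕ) => IsDoor ℓ a.1.1 a.1.2 a.2)).filter (fun (a : ((Fin (n+1) → Fin k) × Equiv.Perm (Fin (n+1))) × ℕ) => a.2 = n+1 ∧ (a.1.1 (Fin.last n) : ℕ) = 0 ∧ a.1.2 (Fin.last n) = Fin.last n), (1:ZMod 2)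
        = ∑ t ∈ Finset.univ.filter
            (fun (t : (Fin n → Fin k) × Equiv.Perm (Fin n)) =>
              IsFull (fun y => ℓ (Fin.snoc y 0)) t.1 t.2), (1:ZMod 2) := by
      refine Finset.sum_bij
        (fun (a : ((Fin (n+1) → Fin k) × Equiv.Perm (Fin (n+1))) × ℕ)
          (ha : a ∈ ((Finset.univ ×ˢ Finset.range (n+2)).filter (fun (a : ((Fin (n+1) → Fin k) × Equiv.Perm (Fin (n+1))) × ℕ) => IsDoor ℓ a.1.1 a.1.2 a.2)).filter (fun (a : ((Fin (n+1) → Fin k) × Equiv.Perm (Fin (n+1))) × ℕ) => a.2 = n+1 ∧ (a.1.1 (Fin.last n) : ℕ) = 0 ∧ a.1.2 (Fin.last n) = Fin.last n)) =>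
          ((fun i => a.1.1 i.castSucc),
          permRestrict a.1.2 (Finset.mem_filter.1 ha).2.2.2)) ?_ ?_ ?_ (fun _ _ => rfl)
      · rintro ⟨⟨x, w⟩, j⟩ ha
        obtain ⟨haP, hj2, hx0, hwl⟩ := Finset.mem_filter.1 ha
        obtain ⟨hmem, hdoor⟩ := Finset.mem_filter.1 haP
        dsimp only at hj2 hx0 hwl hdoor ⊢
        rw [Finset.mem_filter]
        refine ⟨Finset.mem_univ _, ?_⟩
        intro m hm
        rw [hj2] at hdoor
        obtain ⟨j', hj', hj'ne, hj'e⟩ := hdoor m (by omega)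
        refine ⟨j', by omega, ?_⟩
        have hj'e2 := hj'e
        rw [vert_snoc hk x w hx0 hwl j' (by omega)] at hj'e2
        exact hj'e2
      · rintro ⟨⟨x1, w1⟩, j1⟩ ha1 ⟨⟨x2, w2⟩, j2⟩ ha2 heq
        obtain ⟨_, hj1, hx1, hw1⟩ := Finset.mem_filter.1 ha1
        obtain ⟨_, hj2, hx2, hw2⟩ := Finset.mem_filter.1 ha2
        dsimp only at heq hx1 hx2 hw1 hw2 hj1 hj2
        simp only [Prod.mk.injEq] at heq
        obtain ⟨hxeq, hweq⟩ := heq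
        have hx : x1 = x2 := by
          funext i
          induction i using Fin.lastCases with
          | last => apply Fin.ext; rw [hx1, hx2]
          | cast i => exact congrFun hxeq i
        have hw : w1 = w2 := by
          rw [← permExtend_restrict w1 hw1, ← permExtend_restrict w2 hw2, hweq]
        rw [Prod.mk.injEq, Prod.mk.injEq]
        exact ⟨⟨hx, hw⟩, hj1.trans hj2.symm⟩
      · rintro ⟨y, u⟩ ht
        obtain ⟨-, hfull⟩ := Finset.mem_filter.1 ht
        have hx0 : ((Fin.snoc y (⟨0, hk⟩ : Fin k) : Fin (n+1) → Fin k) (Fin.last n) : ℕ) = 0 := by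
          rw [Fin.snoc_last]
        have hwl : permExtend u (Fin.last n) = Fin.last n := permExtend_last u
        have hyrest : (fun i => (Fin.snoc y (⟨0, hk⟩ : Fin k) : Fin (n+1) → Fin k) i.castSucc) = y := by
          funext i; rw [Fin.snoc_castSucc]
        have hrest : ∀ (j' : ℕ), j' ≤ n →
            vert (Fin.snoc y (⟨0, hk⟩ : Fin k)) (permExtend u) j'
              = Fin.snoc (vert y u j') (0:ℕ) := by
          intro j' hj'
          rw [vert_snoc hk _ _ hx0 hwl j' hj', hyrest, permRestrict_extend]
        refine ⟨((Fin.snoc y ⟨0, hk⟩, permExtend u), n+1), ?_, ?_⟩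
        · rw [Finset.mem_filter]
          constructor
          · rw [Finset.mem_filter]
            constructor
            · exact Finset.mem_product.2 ⟨Finset.mem_univ _, Finset.mem_range.2 (by omega)⟩
            · intro m hm
              obtain ⟨j', hj', hj'e⟩ := hfull m (by omega)
              refine ⟨j', by omega, by omega, ?_⟩
              rw [hrest j' hj']
              exact hj'e
          · exact ⟨rfl, hx0, hwl⟩
        · dsimp only
          simp only [Prod.mk.injEq]
          exact ⟨hyrest, permRestrict_extend u _⟩
    -- interior part
    have hI : ∑ _a ∈ ((Finset.univ ×ˢ Finset.range (n+2)).filter (fun (a : ((Fin (n+1) → Fin k) × Equiv.Perm (Fin (n+1))) × ℕ) => IsDoor ℓ a.1.1 a.1.2 a.2)).filter (fun a => ¬ (fun (a : ((Fin (n+1) → Fin k) × Equiv.Perm (Fin (n+1))) × ℕ) => a.2 = n+1 ∧ (a.1.1 (Fin.last n) : ℕ) = 0 ∧ a.1.2 (Fin.last n) = Fin.last n) a), (1:ZMod 2) = 0 := by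
      refine Finset.sum_involution (fun a _ => phi a)
        (fun a ha => by decide) ?_ ?_ ?_
      · -- phi a ≠ a
        rintro ⟨⟨x, w⟩, j⟩ ha -
        intro heq
        obtain ⟨haP, hnb⟩ := Finset.mem_filter.1 ha
        obtain ⟨hmem, hdoor⟩ := Finset.mem_filter.1 haP
        have hjle : j < n+2 := Finset.mem_range.1 (Finset.mem_product.1 hmem).2
        by_cases hj0 : j = 0
        · subst hj0
          rw [phi_zero] at heq
          have h2 := congrArg Prod.snd heq
          dsimp only at h2
          omega
        · by_cases hj1 : j = n+1
          · subst hj1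
            rw [phi_top] at heq
            have h2 := congrArg Prod.snd heq
            dsimp only at h2
            omega
          · rw [phi_mid x w j hj0 hj1] at heq
            have hw := congrArg (fun p => p.1.2) heq
            dsimp only at hw
            have hsw : Equiv.swap ((j-1 : ℕ) : Fin (n+1)) ((j : ℕ) : Fin (n+1)) = 1 :=
              mul_right_cancel (hw.trans (one_mul w).symm)
            rw [Equiv.swap_eq_one_iff] at hsw
            have hv := congrArg Fin.val hsw
            rw [Fin.val_cast_of_lt (by omega), Fin.val_cast_of_lt (by omega)] at hv
            omega
      · -- phi a ∈ s
        rintro ⟨⟨x, w⟩, j⟩ ha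
        obtain ⟨haP, hnb⟩ := Finset.mem_filter.1 ha
        obtain ⟨hmem, hdoor⟩ := Finset.mem_filter.1 haP
        have hjle : j < n+2 := Finset.mem_range.1 (Finset.mem_product.1 hmem).2
        dsimp only
        rw [Finset.mem_filter]
        by_cases hj0 : j = 0
        · subst hj0
          have hint := door_zero_interior hk ℓ Hk x w hdoor
          rw [phi_zero]
          constructor
          · rw [Finset.mem_filter]
            refine ⟨Finset.mem_product.2 ⟨Finset.mem_univ _, Finset.mem_range.2 (by omega)⟩, ?_⟩
            exact (door_rotate_iff ℓ x w hint).2 hdoor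
          · rintro ⟨-, hx0, hwl⟩
            have hsymm : ((finRotate (n+1))⁻¹ * w).symm (Fin.last n) = Fin.last n :=
              (Equiv.symm_apply_eq _).mpr hwl.symm
            have hlast : w.symm 0 = Fin.last n :=
              (rotinv_mul_symm_last w).symm.trans hsymm
            rw [hlast] at hint
            rw [hlast, bump_val x (Fin.last n) hint] at hx0
            omega
        · by_cases hj1 : j = n+1
          · subst hj1
            have hd0 : (x (w.symm (Fin.last n)) : ℕ) ≠ 0 := by
              intro h0
              have hdl := door_top_bottom_face ℓ H0 x w hdoor h0
              refine hnb ⟨rfl, ?_, ?_⟩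
              · rw [← hdl]; exact h0
              · have happ := congrArg w hdl
                rw [Equiv.apply_symm_apply] at happ
                exact happ.symm
            rw [phi_top]
            have hs0 : ((finRotate (n+1)) * w).symm 0 = w.symm (Fin.last n) := rotmul_symm_zero w
            have hcond : ((dropc x (w.symm (Fin.last n))) (((finRotate (n+1))*w).symm 0) : ℕ) + 1 < k := by
              rw [hs0, dropc_val]
              have := (x (w.symm (Fin.last n))).isLt
              omega
            have hbd : bump (dropc x (w.symm (Fin.last n))) (((finRotate (n+1)) * w).symm 0)
                = x := by
              rw [hs0]; exact bump_dropc x _ hd0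
            have hperm : (finRotate (n+1))⁻¹ * ((finRotate (n+1)) * w) = w := by group
            have hdoor' : IsDoor ℓ (dropc x (w.symm (Fin.last n))) ((finRotate (n+1)) * w) 0 := by
              rw [← door_rotate_iff ℓ _ _ hcond, hbd, hperm]
              exact hdoor
            constructor
            · rw [Finset.mem_filter]
              exact ⟨Finset.mem_product.2 ⟨Finset.mem_univ _, Finset.mem_range.2 (by omega)⟩, hdoor'⟩
            · rintro ⟨h0eq, -, -⟩
              omega
          · have h0 : 0 < j := by omega
            have h1 : j < n+1 := by omega
            rw [phi_mid x w j hj0 hj1]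
            constructor
            · rw [Finset.mem_filter]
              refine ⟨Finset.mem_product.2 ⟨Finset.mem_univ _, Finset.mem_range.2 (by omega)⟩, ?_⟩
              exact (door_swap_iff ℓ x w j h0 h1).2 hdoor
            · rintro ⟨hj1', -, -⟩
              exact hj1 hj1'
      · -- involution
        rintro ⟨⟨x, w⟩, j⟩ ha
        obtain ⟨haP, hnb⟩ := Finset.mem_filter.1 ha
        obtain ⟨hmem, hdoor⟩ := Finset.mem_filter.1 haP
        have hjle : j < n+2 := Finset.mem_range.1 (Finset.mem_product.1 hmem).2
        by_cases hj0 : j = 0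
        · subst hj0
          have hint := door_zero_interior hk ℓ Hk x w hdoor
          rw [phi_zero, phi_top]
          rw [rotinv_mul_symm_last w, dropc_bump x _ hint]
          rw [show (finRotate (n+1)) * ((finRotate (n+1))⁻¹ * w) = w from by group]
        · by_cases hj1 : j = n+1
          · subst hj1
            have hd0 : (x (w.symm (Fin.last n)) : ℕ) ≠ 0 := by
              intro h0
              have hdl := door_top_bottom_face ℓ H0 x w hdoor h0
              refine hnb ⟨rfl, ?_, ?_⟩
              · rw [← hdl]; exact h0
              · have happ := congrArg w hdl
                rw [Equiv.apply_symm_apply] at happ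
                exact happ.symm
            rw [phi_top, phi_zero]
            rw [rotmul_symm_zero w, bump_dropc x _ hd0]
            rw [show (finRotate (n+1))⁻¹ * ((finRotate (n+1)) * w) = w from by group]
          · rw [phi_mid x w j hj0 hj1, phi_mid x _ j hj0 hj1]
            rw [show Equiv.swap ((j-1 : ℕ) : Fin (n+1)) ((j : ℕ) : Fin (n+1)) *
                (Equiv.swap ((j-1 : ℕ) : Fin (n+1)) ((j : ℕ) : Fin (n+1)) * w) = w from by
              rw [← mul_assoc, Equiv.swap_mul_self, one_mul]]
    rw [← Finset.sum_filter_add_sum_filter_not ((Finset.univ ×ˢ Finset.range (n+2)).filter (fun (a : ((Fin (n+1) → Fin k) × Equiv.Perm (Fin (n+1))) × ℕ) => IsDoor ℓ a.1.1 a.1.2 a.2))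
      (fun (a : ((Fin (n+1) → Fin k) × Equiv.Perm (Fin (n+1))) × ℕ) =>
        a.2 = n+1 ∧ (a.1.1 (Fin.last n) : ℕ) = 0 ∧ a.1.2 (Fin.last n) = Fin.last n)
      (fun _ => (1:ZMod 2))]
    rw [hB, hI, add_zero]
    exact hIH'

lemma exists_full_simplex (D k : ℕ) (hk : 0 < k) (ℓ : (Fin D → ℕ) → ℕ)
    (H0 : ∀ x (i : Fin D), x i = 0 → ℓ x ≤ (i : ℕ))
    (Hk : ∀ x (i : Fin D), x i = k → ℓ x ≠ (i : ℕ))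
    (Hr : ∀ x, ℓ x ≤ D) :
    ∃ (x : Fin D → Fin k) (w : Equiv.Perm (Fin D)), IsFull ℓ x w := by
  by_contra hcon
  push_neg at hcon
  have hsum := key D k hk ℓ H0 Hk Hr
  rw [Finset.sum_congr rfl (fun s _ => if_neg (hcon s.1 s.2))] at hsum
  rw [Finset.sum_const_zero] at hsum
  exact absurd hsum (by decide)

lemma vert_zero (x : Fin D → Fin k) (w : Equiv.Perm (Fin D)) (i : Fin D) :
    vert x w 0 i = (x i : ℕ) := by
  simp [vert]

/-- the map from grid points to the Hilbert cube -/
noncomputable def gridMap (m : ℕ) (y : Fin m → ℕ) : HilbertCube := fun j =>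
  if h : j < m then Set.projIcc (-1:ℝ) 1 (by norm_num) (-1 + 2 * (y ⟨j, h⟩ : ℝ) / m)
  else ⟨0, by norm_num⟩

lemma gridMap_coord (m : ℕ) (y : Fin m → ℕ) (i : Fin m) (hy : y i ≤ m) :
    (gridMap m y (i : ℕ) : ℝ) = -1 + 2 * (y i : ℝ) / m := by
  have hm : (0:ℝ) < m := by
    have := i.isLt
    exact_mod_cast Nat.pos_of_ne_zero (by omega)
  have hmem : -1 + 2 * (y i : ℝ)/m ∈ Set.Icc (-1:ℝ) 1 := by
    constructor
    · have h1 : (0:ℝ) ≤ 2 * (y i : ℝ)/m := by positivity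
      linarith
    · have h2 : (y i : ℝ) ≤ m := by exact_mod_cast hy
      have h3 : 2 * (y i : ℝ)/m ≤ 2 := by
        rw [div_le_iff₀ hm]; linarith
      linarith
  simp only [gridMap]
  rw [dif_pos i.isLt, Fin.eta, Set.projIcc_of_mem _ hmem]

lemma dist_gridMap_le (m : ℕ) (y z : Fin m → ℕ) (hy : ∀ i, y i ≤ m) (hz : ∀ i, z i ≤ m)
    (hclose : ∀ i, y i ≤ z i + 1 ∧ z i ≤ y i + 1) (j : ℕ) :
    dist (gridMap m y j) (gridMap m z j) ≤ 2 / m := by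
  by_cases h : j < m
  · have h0 : 0 < m := by omega
    have hm : (0:ℝ) < m := by exact_mod_cast h0
    set i : Fin m := ⟨j, h⟩ with hi
    have hji : j = (i : ℕ) := rfl
    rw [Subtype.dist_eq, hji, gridMap_coord m y i (hy i), gridMap_coord m z i (hz i),
      Real.dist_eq]
    have hA : |(y i : ℝ) - (z i : ℝ)| ≤ 1 := by
      rw [abs_sub_le_iff]
      obtain ⟨h1, h2⟩ := hclose i
      constructor
      · have : (y i : ℝ) ≤ (z i : ℝ) + 1 := by exact_mod_cast h1
        linarith
      · have : (z i : ℝ) ≤ (y i : ℝ) + 1 := by exact_mod_cast h2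
        linarith
    have heq : (-1 + 2 * (y i : ℝ)/m) - (-1 + 2 * (z i : ℝ)/m)
        = ((y i : ℝ) - (z i : ℝ)) * (2/m) := by ring
    rw [heq, abs_mul, abs_of_nonneg (by positivity : (0:ℝ) ≤ 2/m)]
    calc |(y i : ℝ) - (z i : ℝ)| * (2/m) ≤ 1 * (2/m) :=
          mul_le_mul_of_nonneg_right hA (by positivity)
      _ = 2/m := one_mul _
  · have heq : gridMap m y j = gridMap m z j := by
      simp [gridMap, h]
    rw [heq, dist_self]
    positivity

/-- The essential family property of the opposite faces of the Hilbert cube. -/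
theorem essential : IsEssentialFamily negFace posFace := by
  classical
  intro L hL
  choose U V hUo hVo hdisj hAU hBV hcomp using fun i => (hL i).2
  have hPex : ∀ (M : ℕ) (y : Fin M → ℕ), ∃ i : ℕ, M ≤ i ∨ gridMap M y ∉ V i :=
    fun M y => ⟨M, Or.inl le_rfl⟩
  have hforall : ∀ m : ℕ, ∃ xw : (Fin (m+1) → Fin (m+1)) × Equiv.Perm (Fin (m+1)),
      IsFull (fun y => Nat.find (hPex (m+1) y)) xw.1 xw.2 := by
    intro m
    have H0 : ∀ (y : Fin (m+1) → ℕ) (i : Fin (m+1)), y i = 0 →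
        Nat.find (hPex (m+1) y) ≤ (i:ℕ) := by
      intro y i hy
      apply Nat.find_le
      right
      intro hmem
      have hval : (gridMap (m+1) y (i:ℕ) : ℝ) = -1 := by
        rw [gridMap_coord (m+1) y i (by omega), hy]
        norm_num
      have hneg : gridMap (m+1) y ∈ negFace (i:ℕ) := hval
      exact (Set.disjoint_left.1 (hdisj (i:ℕ))) (hAU (i:ℕ) hneg) hmem
    have Hk : ∀ (y : Fin (m+1) → ℕ) (i : Fin (m+1)), y i = m+1 →
        Nat.find (hPex (m+1) y) ≠ (i:ℕ) := by
      intro y i hy hfind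
      have hspec := Nat.find_spec (hPex (m+1) y)
      rw [hfind] at hspec
      rcases hspec with h | h
      · have := i.isLt; omega
      · apply h
        apply hBV
        show (gridMap (m+1) y (i:ℕ) : ℝ) = 1
        rw [gridMap_coord (m+1) y i (by omega), hy]
        have hne : ((m:ℝ)+1) ≠ 0 := by positivity
        push_cast
        field_simp
        norm_num
    have Hr : ∀ (y : Fin (m+1) → ℕ), Nat.find (hPex (m+1) y) ≤ m+1 :=
      fun y => Nat.find_le (Or.inl le_rfl)
    obtain ⟨x, w, h⟩ := exists_full_simplex (m+1) (m+1) (Nat.succ_pos m) _ H0 Hk Hr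
    exact ⟨(x, w), h⟩
  choose σ hσ using hforall
  set q : ℕ → HilbertCube := fun m => gridMap (m+1) (vert (σ m).1 (σ m).2 0) with hq
  obtain ⟨p, hp⟩ := exists_clusterPt_of_compactSpace (Filter.map q Filter.atTop)
  refine ⟨p, Set.mem_iInter.2 ?_⟩
  intro i
  by_contra hpL
  have hpUV : p ∈ U i ∪ V i := by
    rw [← hcomp i]; exact hpL
  have claim : ∀ O : Set HilbertCube, IsOpen O → p ∈ O →
      ∃ z₁ z₂ : HilbertCube, z₁ ∈ O ∧ z₂ ∈ O ∧ z₁ ∉ V i ∧ z₂ ∈ V i := by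
    intro O hO hpO
    obtain ⟨I, uu, huu, hsub⟩ := (isOpen_pi_iff.1 hO) p hpO
    have hballs : ∀ a ∈ I, ∃ ε > 0, Metric.ball (p a) ε ⊆ uu a := by
      intro a ha
      exact Metric.isOpen_iff.1 (huu a ha).1 (p a) (huu a ha).2
    choose! ε hε hball using hballs
    set C : Set HilbertCube := {y | ∀ a ∈ I, dist (y a) (p a) < ε a / 2} with hC
    have hCopen : IsOpen C := by
      have hCeq : C = ⋂ a ∈ I, (fun y : HilbertCube => y a) ⁻¹' Metric.ball (p a) (ε a / 2) := by
        ext y; simp [hC, Metric.mem_ball]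
      rw [hCeq]
      exact isOpen_biInter_finset fun a _ =>
        (Metric.isOpen_ball).preimage (continuous_apply a)
    have hpC : p ∈ C := by
      intro a ha
      simpa using half_pos (hε a ha)
    have hEv : ∀ᶠ m in Filter.atTop,
        (i ≤ m ∧ ∀ a ∈ I, ((a < m+1) ∧ 2/((m:ℝ)+1) < ε a / 2)) := by
      refine (Filter.eventually_ge_atTop i).and ?_
      rw [Finset.eventually_all]
      intro a ha
      have h1 : ∀ᶠ m in Filter.atTop, a < m + 1 :=
        Filter.eventually_atTop.2 ⟨a, fun b hb => by omega⟩
      have h2 : ∀ᶠ (m:ℕ) in Filter.atTop, 2/((m:ℝ)+1) < ε a / 2 := by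
        have hεa := hε a ha
        refine Filter.eventually_atTop.2 ⟨Nat.ceil (4 / ε a), fun b hb => ?_⟩
        have hb' : (4 / ε a : ℝ) ≤ b := le_trans (Nat.le_ceil _) (by exact_mod_cast hb)
        rw [div_lt_iff₀ (by positivity)]
        rw [div_le_iff₀ hεa] at hb'
        nlinarith [hεa]
      exact h1.and h2
    obtain ⟨z0, hz0C, hz0img⟩ := clusterPt_iff_nonempty.1 hp (hCopen.mem_nhds hpC)
      (Filter.image_mem_map hEv)
    obtain ⟨m, hmE, rfl⟩ := hz0img
    obtain ⟨him, hIcond⟩ := hmE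
    have hinO : ∀ (j' : ℕ), gridMap (m+1) (vert (σ m).1 (σ m).2 j') ∈ O := by
      intro j'
      apply hsub
      intro a ha
      apply hball a ha
      rw [Metric.mem_ball]
      have hclose : ∀ i', vert (σ m).1 (σ m).2 j' i' ≤ vert (σ m).1 (σ m).2 0 i' + 1 ∧
          vert (σ m).1 (σ m).2 0 i' ≤ vert (σ m).1 (σ m).2 j' i' + 1 := by
        intro i'
        rw [vert_zero]
        unfold vert
        have hneg : ¬ (((σ m).2 i' : ℕ) < 0) := by omega
        split <;> omega
      have h1 : dist (gridMap (m+1) (vert (σ m).1 (σ m).2 j') a) (q m a) ≤ 2/((m:ℝ)+1) := by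
        rw [hq]
        have := dist_gridMap_le (m+1) (vert (σ m).1 (σ m).2 j') (vert (σ m).1 (σ m).2 0)
          (fun i' => vert_le _ _ _ _) (fun i' => vert_le _ _ _ _) hclose a
        have hcast : ((m+1 : ℕ) : ℝ) = (m:ℝ)+1 := by push_cast; ring
        rw [hcast] at this
        exact this
      have h2 : dist (q m a) (p a) < ε a / 2 := hz0C a ha
      have h3 : 2/((m:ℝ)+1) < ε a / 2 := (hIcond a ha).2
      calc dist (gridMap (m+1) (vert (σ m).1 (σ m).2 j') a) (p a)
          ≤ dist (gridMap (m+1) (vert (σ m).1 (σ m).2 j') a) (q m a) + dist (q m a) (p a) :=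
            dist_triangle _ _ _
        _ < ε a := by linarith
    obtain ⟨j₁, hj₁, hl₁⟩ := hσ m i (by omega)
    obtain ⟨j₂, hj₂, hl₂⟩ := hσ m (i+1) (by omega)
    refine ⟨gridMap (m+1) (vert (σ m).1 (σ m).2 j₁),
      gridMap (m+1) (vert (σ m).1 (σ m).2 j₂), hinO j₁, hinO j₂, ?_, ?_⟩
    · have hspec := Nat.find_spec (hPex (m+1) (vert (σ m).1 (σ m).2 j₁))
      have hl₁' : Nat.find (hPex (m+1) (vert (σ m).1 (σ m).2 j₁)) = i := hl₁
      rw [hl₁'] at hspec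
      rcases hspec with h | h
      · omega
      · exact h
    · have hl₂' : Nat.find (hPex (m+1) (vert (σ m).1 (σ m).2 j₂)) = i + 1 := hl₂
      have hmin := Nat.find_min (hPex (m+1) (vert (σ m).1 (σ m).2 j₂))
        (m := i) (by omega)
      push_neg at hmin
      exact hmin.2
  rcases hpUV with hpU | hpV
  · obtain ⟨z₁, z₂, h₁, h₂, hn, hv⟩ := claim (U i) (hUo i) hpU
    exact (Set.disjoint_left.1 (hdisj i)) h₂ hv
  · obtain ⟨z₁, z₂, h₁, h₂, hn, hv⟩ := claim (V i) (hVo i) hpV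
    exact hn h₁

end HilbertAux

/-- In the Hilbert cube, the countably infinite family of pairs of opposite
faces `{(W_n^-, W_n^+) : n ∈ ℕ}` is essential; in particular the Hilbert cube is
strongly infinite dimensional. -/
theorem hilbertCube_faces_essential_and_stronglyInfiniteDimensional :
    IsEssentialFamily negFace posFace ∧ StronglyInfiniteDimensional HilbertCube := by
  have hess := HilbertAux.essential
  refine ⟨hess, negFace, posFace, fun nn => ⟨?_, ?_, ?_⟩, hess⟩
  · exact (IsClosed.preimage (continuous_subtype_val.comp (continuous_apply nn))
      (isClosed_singleton (x := (-1:ℝ))) : IsClosed {x : HilbertCube | (x nn : ℝ) = -1})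
  · exact (IsClosed.preimage (continuous_subtype_val.comp (continuous_apply nn))
      (isClosed_singleton (x := (1:ℝ))) : IsClosed {x : HilbertCube | (x nn : ℝ) = 1})
  · rw [Set.disjoint_left]
    intro x hx1 hx2
    have h1 : (x nn : ℝ) = -1 := hx1
    have h2 : (x nn : ℝ) = 1 := hx2
    linarith
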